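/- Assume the Poincaré hypothesis with constant c and the embedding hypothesis. Let Ω ⊆ ℝⁿ be a bounded open set and K ⊆ Ω compact. Then C_{p,ϑ}(K) ≤ C · max{ cap_{p,ϑ}(K,Ω)^{1/p⁺}, cap_{p,ϑ}(K,Ω) }, where C = 2 max{ 1, c · diam(Ω) · c₁(Ω) } depends only on the Poincaré constant, the embedding constant and diam(Ω). -/

import Mathlib

open MeasureTheory Metric Set Filter ENNReal

noncomputable section

/-- The weighted variable exponent modular `ρ_{p,ϑ,A}(g) = ∫_A |g|^{p(x)} ϑ(x) dx`. -/
def rhoMod {n : ℕ} (p ϑ : EuclideanSpace ℝ (Fin n) → ℝ)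
    (A : Set (EuclideanSpace ℝ (Fin n))) (g : EuclideanSpace ℝ (Fin n) → ℝ) : ℝ≥0∞ :=
  ∫⁻ x in A, ENNReal.ofReal (|g x| ^ p x * ϑ x)

/-- Relative `(p(·),ϑ)`-capacity of a compact set `K` with respect to an open set `Ω`:
the infimum of `ρ_{p,ϑ,Ω}(‖Df‖)` over `C¹` functions with compact support contained in `Ω`
which are `≥ 1` on `K` (with `sInf ∅ = ∞`). -/
def relCapK {n : ℕ} (p ϑ : EuclideanSpace ℝ (Fin n) → ℝ)
    (K Ω : Set (EuclideanSpace ℝ (Fin n))) : ℝ≥0∞ :=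
  sInf ((fun f => rhoMod p ϑ Ω fun x => ‖fderiv ℝ f x‖) ''
    {f : EuclideanSpace ℝ (Fin n) → ℝ |
      ContDiff ℝ 1 f ∧ IsCompact (tsupport f) ∧ tsupport f ⊆ Ω ∧ ∀ x ∈ K, 1 ≤ f x})

/-- Relative capacity of an open subset `U ⊆ Ω`. -/
def relCapO {n : ℕ} (p ϑ : EuclideanSpace ℝ (Fin n) → ℝ)
    (U Ω : Set (EuclideanSpace ℝ (Fin n))) : ℝ≥0∞ :=
  ⨆ (K : Set (EuclideanSpace ℝ (Fin n))) (_ : IsCompact K ∧ K ⊆ U), relCapK p ϑ K Ω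

/-- Relative capacity of an arbitrary subset `A ⊆ Ω`. -/
def relCap {n : ℕ} (p ϑ : EuclideanSpace ℝ (Fin n) → ℝ)
    (A Ω : Set (EuclideanSpace ℝ (Fin n))) : ℝ≥0∞ :=
  ⨅ (U : Set (EuclideanSpace ℝ (Fin n))) (_ : IsOpen U ∧ A ⊆ U ∧ U ⊆ Ω), relCapO p ϑ U Ω

/-- The Sobolev `(p(·),ϑ)`-capacity of `A ⊆ ℝⁿ`. -/
def sobCap {n : ℕ} (p ϑ : EuclideanSpace ℝ (Fin n) → ℝ)
    (A : Set (EuclideanSpace ℝ (Fin n))) : ℝ≥0∞ :=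
  sInf ((fun f => ∫⁻ x, ENNReal.ofReal ((|f x| ^ p x + ‖fderiv ℝ f x‖ ^ p x) * ϑ x)) ''
    {f : EuclideanSpace ℝ (Fin n) → ℝ |
      ContDiff ℝ 1 f ∧ ∃ U, IsOpen U ∧ A ⊆ U ∧ ∀ x ∈ U, 1 ≤ f x})

/-- The weighted measure `μ_ϑ(A) = ∫_A ϑ(x) dx`. -/
def muW {n : ℕ} (ϑ : EuclideanSpace ℝ (Fin n) → ℝ)
    (A : Set (EuclideanSpace ℝ (Fin n))) : ℝ≥0∞ :=
  ∫⁻ x in A, ENNReal.ofReal (ϑ x)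

/-- `μ_ϑ` is doubling with constant `cd`. -/
def DoublingW {n : ℕ} (ϑ : EuclideanSpace ℝ (Fin n) → ℝ) (cd : ℝ) : Prop :=
  1 ≤ cd ∧ ∀ (x : EuclideanSpace ℝ (Fin n)) (r : ℝ), 0 < r →
    muW ϑ (ball x (2 * r)) ≤ ENNReal.ofReal cd * muW ϑ (ball x r)

/-- Poincaré hypothesis with constant `c` for the weight `ϑ`. -/
def PoincareHyp {n : ℕ} (ϑ : EuclideanSpace ℝ (Fin n) → ℝ) (c : ℝ) : Prop :=
  ∀ Ω : Set (EuclideanSpace ℝ (Fin n)), IsOpen Ω → Bornology.IsBounded Ω →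
    ∀ f : EuclideanSpace ℝ (Fin n) → ℝ, ContDiff ℝ 1 f → IsCompact (tsupport f) →
      tsupport f ⊆ Ω →
      ∫ x in Ω, |f x| * ϑ x ≤ c * diam Ω * ∫ x in Ω, ‖fderiv ℝ f x‖ * ϑ x

/-- Embedding hypothesis `L^{p(·)}_ϑ(Ω) ↪ L¹_ϑ(Ω)` with constants `c₁ Ω`. -/
def EmbeddingHyp {n : ℕ} (p ϑ : EuclideanSpace ℝ (Fin n) → ℝ)
    (c₁ : Set (EuclideanSpace ℝ (Fin n)) → ℝ) : Prop :=
  ∀ Ω : Set (EuclideanSpace ℝ (Fin n)), IsOpen Ω → Bornology.IsBounded Ω →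
    0 < c₁ Ω ∧ ∀ g : EuclideanSpace ℝ (Fin n) → ℝ, Measurable g → 1 ≤ rhoMod p ϑ Ω g →
      (∫⁻ x in Ω, ENNReal.ofReal (|g x| * ϑ x)) ≤ ENNReal.ofReal (c₁ Ω) * rhoMod p ϑ Ω g

/-- The Wiener sum `W^{sum}_{p,ϑ}(A,x₀)`. -/
def wienerSum {n : ℕ} (p ϑ : EuclideanSpace ℝ (Fin n) → ℝ)
    (A : Set (EuclideanSpace ℝ (Fin n))) (x₀ : EuclideanSpace ℝ (Fin n)) : ℝ≥0∞ :=
  ∑' i : ℕ,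
    (relCap p ϑ (A ∩ ball x₀ ((2 : ℝ) ^ (-(i : ℤ)))) (ball x₀ ((2 : ℝ) ^ (1 - (i : ℤ)))) /
        relCap p ϑ (ball x₀ ((2 : ℝ) ^ (-(i : ℤ)))) (ball x₀ ((2 : ℝ) ^ (1 - (i : ℤ))))) ^
      (1 / (p x₀ - 1))

/-- The Wiener type integral `W_{p,ϑ}(A,x₀)`. -/
def wienerInt {n : ℕ} (p ϑ : EuclideanSpace ℝ (Fin n) → ℝ)
    (A : Set (EuclideanSpace ℝ (Fin n))) (x₀ : EuclideanSpace ℝ (Fin n)) : ℝ≥0∞ :=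
  ∫⁻ r in Set.Ioo (0 : ℝ) 1,
    (relCap p ϑ (A ∩ ball x₀ r) (ball x₀ (2 * r)) /
        relCap p ϑ (ball x₀ r) (ball x₀ (2 * r))) ^ (1 / (p x₀ - 1)) / ENNReal.ofReal r



lemma exists_cutoff (δ : ℝ) (hδ : 0 < δ) (hδ1 : δ ≤ 1) :
    ∃ (η χ : ℝ → ℝ), ContDiff ℝ 1 η ∧ (∀ t, HasDerivAt η (χ t) t) ∧
      (∀ t, 0 ≤ χ t) ∧ (∀ t, χ t ≤ 1) ∧
      (∀ t, t ≤ 0 → η t = 0) ∧ (∀ t, 0 ≤ η t) ∧ (∀ t, η t ≤ 1 + δ) ∧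
      (∀ t, 1 + 3*δ/4 ≤ t → 1 ≤ η t) := by
  set a : ℝ := δ/4 with ha
  set b : ℝ := 1 + 3*δ/4 with hb
  have ha0 : 0 < a := by positivity
  have hb0 : (0:ℝ) < b := by rw [hb]; linarith
  have hab : 2*a ≤ b := by rw [ha, hb]; nlinarith
  set χ : ℝ → ℝ := fun s => max 0 (min 1 (min (s/a) ((b - s)/a))) with hχ
  have hχc : Continuous χ := by
    apply continuous_const.max
    apply continuous_const.min
    exact ((continuous_id.div_const a).min ((continuous_const.sub continuous_id).div_const a))
  have hχ0 : ∀ s, s ≤ 0 → χ s = 0 := by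
    intro s hs
    have h1 : min 1 (min (s/a) ((b - s)/a)) ≤ 0 :=
      le_trans (le_trans (min_le_right _ _) (min_le_left _ _))
        (div_nonpos_of_nonpos_of_nonneg hs ha0.le)
    exact max_eq_left h1
  have hχb : ∀ s, b ≤ s → χ s = 0 := by
    intro s hs
    have h1 : min 1 (min (s/a) ((b - s)/a)) ≤ 0 :=
      le_trans (le_trans (min_le_right _ _) (min_le_right _ _))
        (div_nonpos_of_nonpos_of_nonneg (by linarith) ha0.le)
    exact max_eq_left h1
  have hχ1 : ∀ s, s ∈ Icc a (b - a) → χ s = 1 := by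
    intro s hs
    have h1 : (1:ℝ) ≤ s/a := (one_le_div ha0).2 hs.1
    have h2 : (1:ℝ) ≤ (b - s)/a := (one_le_div ha0).2 (by linarith [hs.2])
    rw [hχ]
    simp only [min_eq_left (le_min h1 h2)]
    exact max_eq_right zero_le_one
  have hχnn : ∀ s, 0 ≤ χ s := fun s => le_max_left _ _
  have hχle1 : ∀ s, χ s ≤ 1 := fun s => max_le zero_le_one (min_le_left _ _)
  have hint : ∀ u v : ℝ, IntervalIntegrable χ volume u v := fun u v => hχc.intervalIntegrable u v
  set η : ℝ → ℝ := fun t => ∫ s in (0:ℝ)..t, χ s with hη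
  have hder : ∀ t, HasDerivAt η (χ t) t := fun t =>
    intervalIntegral.integral_hasDerivAt_right (hint 0 t)
      (hχc.stronglyMeasurableAtFilter _ _) hχc.continuousAt
  have hηC1 : ContDiff ℝ 1 η := by
    rw [contDiff_one_iff_deriv]
    refine ⟨fun t => (hder t).differentiableAt, ?_⟩
    have : deriv η = χ := funext fun t => (hder t).deriv
    rw [this]; exact hχc
  have hadd : ∀ u v : ℝ, η v = η u + ∫ s in u..v, χ s := by
    intro u v
    have h := intervalIntegral.integral_add_adjacent_intervals (hint 0 u) (hint u v)
    exact h.symm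
  have hη0 : ∀ t, t ≤ 0 → η t = 0 := by
    intro t ht
    have hEq : EqOn χ (fun _ => (0:ℝ)) (uIcc 0 t) := by
      intro s hs
      rw [uIcc_of_ge ht] at hs
      exact hχ0 s hs.2
    show (∫ s in (0:ℝ)..t, χ s) = 0
    rw [intervalIntegral.integral_congr hEq]
    simp
  have hηnn : ∀ t, 0 ≤ η t := by
    intro t
    rcases le_or_gt t 0 with ht | ht
    · rw [hη0 t ht]
    · exact intervalIntegral.integral_nonneg ht.le (fun s _ => hχnn s)
  have hmono : ∀ u v : ℝ, u ≤ v → η u ≤ η v := by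
    intro u v huv
    rw [hadd u v]
    have h2 : 0 ≤ ∫ s in u..v, χ s :=
      intervalIntegral.integral_nonneg huv (fun s _ => hχnn s)
    linarith
  have hηb : ∀ t, η t ≤ b := by
    intro t
    rcases le_or_gt t b with ht | ht
    · rcases le_or_gt t 0 with h0 | h0
      · rw [hη0 t h0]; exact hb0.le
      · calc η t ≤ ∫ s in (0:ℝ)..t, 1 :=
              intervalIntegral.integral_mono_on h0.le (hint 0 t)
                intervalIntegrable_const (fun s _ => hχle1 s)
          _ = t := by simp
          _ ≤ b := ht
    · rw [hadd b t]
      have hz : (∫ s in b..t, χ s) = 0 := by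
        have hEq : EqOn χ (fun _ => (0:ℝ)) (uIcc b t) := by
          intro s hs
          rw [uIcc_of_le ht.le] at hs
          exact hχb s hs.1
        rw [intervalIntegral.integral_congr hEq]; simp
      rw [hz, add_zero]
      calc η b ≤ ∫ s in (0:ℝ)..b, 1 :=
            intervalIntegral.integral_mono_on hb0.le (hint 0 b)
              intervalIntegrable_const (fun s _ => hχle1 s)
        _ = b := by simp
  have hη1 : ∀ t, b ≤ t → 1 ≤ η t := by
    intro t ht
    have h1 : η (b - a) = η a + ∫ s in a..(b-a), χ s := hadd a (b-a)
    have h2 : (∫ s in a..(b-a), χ s) = b - 2*a := by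
      have he : EqOn χ (fun _ => (1:ℝ)) (uIcc a (b-a)) := by
        intro s hs
        rw [uIcc_of_le (by linarith)] at hs
        exact hχ1 s hs
      rw [intervalIntegral.integral_congr he]
      simp; ring
    have h4 : (1:ℝ) ≤ b - 2*a := by rw [ha, hb]; nlinarith
    have h3 : 1 ≤ η (b - a) := by
      rw [h1, h2]
      linarith [hηnn a]
    exact le_trans h3 (hmono _ _ (by linarith))
  exact ⟨η, χ, hηC1, hder, hχnn, hχle1, hη0, hηnn,
    fun t => le_trans (hηb t) (by rw [hb]; linarith),
    fun t ht => hη1 t (by rw [hb]; exact ht)⟩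

set_option maxHeartbeats 1000000 in
lemma embed_norm {n : ℕ} (p ϑ : EuclideanSpace ℝ (Fin n) → ℝ) (hp : Measurable p)
    (hϑpos : ∀ x, 0 < ϑ x) (Ω : Set (EuclideanSpace ℝ (Fin n))) (P : ℝ) (hP1 : 1 < P)
    (h1p : ∀ᵐ x ∂(volume : Measure (EuclideanSpace ℝ (Fin n))), 1 < p x)
    (hpP : ∀ᵐ x ∂(volume : Measure (EuclideanSpace ℝ (Fin n))), p x ≤ P)
    (hϑm : AEMeasurable ϑ ((volume : Measure (EuclideanSpace ℝ (Fin n))).restrict Ω))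
    (c₁ : ℝ)
    (hEΩ : ∀ g : EuclideanSpace ℝ (Fin n) → ℝ, Measurable g → 1 ≤ rhoMod p ϑ Ω g →
      (∫⁻ x in Ω, ENNReal.ofReal (|g x| * ϑ x)) ≤ ENNReal.ofReal c₁ * rhoMod p ϑ Ω g)
    (G : EuclideanSpace ℝ (Fin n) → ℝ) (hG : Measurable G) (hGnn : ∀ x, 0 ≤ G x)
    (hσtop : rhoMod p ϑ Ω G ≠ ⊤) (hc₁ : 0 ≤ c₁) :
    (∫⁻ x in Ω, ENNReal.ofReal (G x * ϑ x)) ≤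
      ENNReal.ofReal c₁ * max ((rhoMod p ϑ Ω G) ^ (1/P)) (rhoMod p ϑ Ω G) := by
  classical
  set μ := (volume : Measure (EuclideanSpace ℝ (Fin n))).restrict Ω with hμ
  set σ := rhoMod p ϑ Ω G with hσdef
  have h1pΩ : ∀ᵐ x ∂μ, 1 < p x := ae_restrict_of_ae h1p
  have hpPΩ : ∀ᵐ x ∂μ, p x ≤ P := ae_restrict_of_ae hpP
  set ϑm := hϑm.mk ϑ with hϑmdef
  have hϑeq : ϑ =ᵐ[μ] ϑm := hϑm.ae_eq_mk
  have hϑmpos : ∀ᵐ x ∂μ, 0 < ϑm x := by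
    filter_upwards [hϑeq] with x hx; rw [← hx]; exact hϑpos x
  have hρ_eq : ∀ H : EuclideanSpace ℝ (Fin n) → ℝ,
      rhoMod p ϑ Ω H = ∫⁻ x in Ω, ENNReal.ofReal (|H x| ^ p x * ϑm x) := by
    intro H
    refine lintegral_congr_ae (hϑeq.mono fun x hx => ?_)
    dsimp only [rhoMod]
    rw [hx]
  have hmeasJ : ∀ (H : EuclideanSpace ℝ (Fin n) → ℝ), Measurable H →
      Measurable (fun x => ENNReal.ofReal (|H x| ^ p x * ϑm x)) := by
    intro H hH
    exact ((hH.abs.pow hp).mul hϑm.measurable_mk).ennreal_ofReal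
  -- case σ = 0
  rcases eq_or_ne σ 0 with hσ0 | hσ0
  · have h0 : (∫⁻ x in Ω, ENNReal.ofReal (|G x| ^ p x * ϑm x)) = 0 := by
      rw [← hρ_eq G]; exact hσ0
    have hae := (lintegral_eq_zero_iff (hmeasJ G hG)).1 h0
    have hzero : (fun x => ENNReal.ofReal (G x * ϑ x)) =ᵐ[μ] (fun _ => 0) := by
      filter_upwards [hae, h1pΩ, hϑeq] with x hx hpx hϑx
      simp only [Pi.zero_apply] at hx ⊢
      rw [ENNReal.ofReal_eq_zero] at hx ⊢
      by_cases hGx : G x = 0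
      · rw [hGx, zero_mul]
      · exfalso
        have h1 : 0 < |G x| ^ p x := Real.rpow_pos_of_pos (abs_pos.2 hGx) _
        have h2 : 0 < ϑm x := by rw [← hϑx]; exact hϑpos x
        have := mul_pos h1 h2
        linarith
    calc (∫⁻ x in Ω, ENNReal.ofReal (G x * ϑ x)) = ∫⁻ _ in Ω, (0:ℝ≥0∞) :=
          lintegral_congr_ae hzero
      _ = 0 := lintegral_zero
      _ ≤ _ := zero_le
  have habsG : (fun x => ENNReal.ofReal (G x * ϑ x)) =
      fun x => ENNReal.ofReal (|G x| * ϑ x) := funext fun x => by rw [abs_of_nonneg (hGnn x)]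
  rcases le_or_gt 1 σ with hσ1 | hσ1
  · calc (∫⁻ x in Ω, ENNReal.ofReal (G x * ϑ x)) = ∫⁻ x in Ω, ENNReal.ofReal (|G x| * ϑ x) := by
          rw [habsG]
      _ ≤ ENNReal.ofReal c₁ * σ := hEΩ G hG hσ1
      _ ≤ _ := mul_le_mul_right (le_max_right _ _) _
  -- main case 0 < σ < 1
  have hP0 : (0:ℝ) < P := lt_trans one_pos hP1
  set s := σ.toReal with hsdef
  have hs0 : 0 < s := ENNReal.toReal_pos hσ0 hσtop
  have hs1 : s < 1 := by simpa using ENNReal.toReal_strict_mono one_ne_top hσ1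
  have hofs : ENNReal.ofReal s = σ := ENNReal.ofReal_toReal hσtop
  set lam := s ^ (1/P) with hlamdef
  have hlam0 : 0 < lam := Real.rpow_pos_of_pos hs0 _
  have hlam1 : lam ≤ 1 := Real.rpow_le_one hs0.le hs1.le (by positivity)
  have hslam : s ≤ lam := by
    calc s = s ^ (1:ℝ) := (Real.rpow_one s).symm
      _ ≤ s ^ (1/P) := Real.rpow_le_rpow_of_exponent_ge hs0 hs1.le
          ((div_le_one hP0).2 hP1.le)
  have hlamP : lam ^ P = s := by
    rw [hlamdef, ← Real.rpow_mul hs0.le, one_div_mul_cancel hP0.ne', Real.rpow_one]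
  set Fm : ℝ → ℝ≥0∞ := fun t => ∫⁻ x in Ω, ENNReal.ofReal (|G x / t| ^ p x * ϑm x) with hFmdef
  have hσm : σ = ∫⁻ x in Ω, ENNReal.ofReal (|G x| ^ p x * ϑm x) := hρ_eq G
  -- pointwise bounds
  have hptwise_up : ∀ t : ℝ, 0 < t → t ≤ 1 → ∀ᵐ x ∂μ,
      ENNReal.ofReal (|G x / t| ^ p x * ϑm x) ≤
        ENNReal.ofReal (t⁻¹ ^ P) * ENNReal.ofReal (|G x| ^ p x * ϑm x) := by
    intro t ht0 ht1
    filter_upwards [h1pΩ, hpPΩ, hϑmpos] with x hpx hpPx hϑx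
    rw [← ENNReal.ofReal_mul (by positivity)]
    apply ENNReal.ofReal_le_ofReal
    have habs : |G x / t| = |G x| * t⁻¹ := by
      rw [abs_div, abs_of_pos ht0, div_eq_mul_inv]
    rw [habs, Real.mul_rpow (abs_nonneg _) (by positivity)]
    have hle : t⁻¹ ^ p x ≤ t⁻¹ ^ P :=
      Real.rpow_le_rpow_of_exponent_le (one_le_inv_iff₀.2 ⟨ht0, ht1⟩) hpPx
    have h1 : 0 ≤ |G x| ^ p x := Real.rpow_nonneg (abs_nonneg _) _
    calc |G x| ^ p x * t⁻¹ ^ p x * ϑm x ≤ |G x| ^ p x * t⁻¹ ^ P * ϑm x :=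
          mul_le_mul_of_nonneg_right (mul_le_mul_of_nonneg_left hle h1) hϑx.le
      _ = t⁻¹ ^ P * (|G x| ^ p x * ϑm x) := by ring
  have hptwise_dn : ∀ t : ℝ, 0 < t → t ≤ 1 → ∀ᵐ x ∂μ,
      ENNReal.ofReal t⁻¹ * ENNReal.ofReal (|G x| ^ p x * ϑm x) ≤
        ENNReal.ofReal (|G x / t| ^ p x * ϑm x) := by
    intro t ht0 ht1
    filter_upwards [h1pΩ, hpPΩ, hϑmpos] with x hpx hpPx hϑx
    rw [← ENNReal.ofReal_mul (by positivity)]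
    apply ENNReal.ofReal_le_ofReal
    have habs : |G x / t| = |G x| * t⁻¹ := by
      rw [abs_div, abs_of_pos ht0, div_eq_mul_inv]
    rw [habs, Real.mul_rpow (abs_nonneg _) (by positivity)]
    have hle : t⁻¹ ^ (1:ℝ) ≤ t⁻¹ ^ p x :=
      Real.rpow_le_rpow_of_exponent_le (one_le_inv_iff₀.2 ⟨ht0, ht1⟩) hpx.le
    rw [Real.rpow_one] at hle
    have h1 : 0 ≤ |G x| ^ p x := Real.rpow_nonneg (abs_nonneg _) _
    calc t⁻¹ * (|G x| ^ p x * ϑm x) = |G x| ^ p x * t⁻¹ * ϑm x := by ring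
      _ ≤ |G x| ^ p x * t⁻¹ ^ p x * ϑm x :=
          mul_le_mul_of_nonneg_right (mul_le_mul_of_nonneg_left hle h1) hϑx.le
  have hFmle : ∀ t : ℝ, 0 < t → t ≤ 1 → Fm t ≤ ENNReal.ofReal (t⁻¹ ^ P) * σ := by
    intro t ht0 ht1
    calc Fm t ≤ ∫⁻ x in Ω, ENNReal.ofReal (t⁻¹ ^ P) * ENNReal.ofReal (|G x| ^ p x * ϑm x) :=
          lintegral_mono_ae (hptwise_up t ht0 ht1)
      _ = ENNReal.ofReal (t⁻¹ ^ P) * ∫⁻ x in Ω, ENNReal.ofReal (|G x| ^ p x * ϑm x) :=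
          lintegral_const_mul' _ _ ENNReal.ofReal_ne_top
      _ = ENNReal.ofReal (t⁻¹ ^ P) * σ := by rw [← hσm]
  have hFmge : ∀ t : ℝ, 0 < t → t ≤ 1 → ENNReal.ofReal t⁻¹ * σ ≤ Fm t := by
    intro t ht0 ht1
    calc ENNReal.ofReal t⁻¹ * σ
        = ∫⁻ x in Ω, ENNReal.ofReal t⁻¹ * ENNReal.ofReal (|G x| ^ p x * ϑm x) := by
          rw [lintegral_const_mul' _ _ ENNReal.ofReal_ne_top, ← hσm]
      _ ≤ Fm t := lintegral_mono_ae (hptwise_dn t ht0 ht1)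
  have hone : ENNReal.ofReal s⁻¹ * σ = 1 := by
    rw [← hofs, ← ENNReal.ofReal_mul (by positivity), inv_mul_cancel₀ hs0.ne']
    exact ENNReal.ofReal_one
  have hFs1 : 1 ≤ Fm s := by rw [← hone]; exact hFmge s hs0 hs1.le
  have hFlam1 : Fm lam ≤ 1 := by
    have h := hFmle lam hlam0 hlam1
    rwa [Real.inv_rpow hlam0.le, hlamP, hone] at h
  have hFfin : ∀ t ∈ Icc s lam, Fm t ≠ ⊤ := by
    intro t ht
    have ht0 : 0 < t := lt_of_lt_of_le hs0 ht.1
    have := hFmle t ht0 (le_trans ht.2 hlam1)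
    exact ne_top_of_le_ne_top (ENNReal.mul_ne_top ENNReal.ofReal_ne_top hσtop) this
  -- continuity on Icc s lam
  have hcont : ContinuousOn (fun t => (Fm t).toReal) (Icc s lam) := by
    intro t₀ ht₀
    have ht₀0 : 0 < t₀ := lt_of_lt_of_le hs0 ht₀.1
    have htd : Tendsto Fm (nhdsWithin t₀ (Icc s lam)) (nhds (Fm t₀)) := by
      apply tendsto_lintegral_filter_of_dominated_convergence
        (fun x => ENNReal.ofReal (s⁻¹ ^ P) * ENNReal.ofReal (|G x| ^ p x * ϑm x))
      · exact Filter.Eventually.of_forall fun t => hmeasJ _ (hG.div_const t)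
      · filter_upwards [self_mem_nhdsWithin] with t ht
        have ht0 : 0 < t := lt_of_lt_of_le hs0 ht.1
        have hts : t⁻¹ ≤ s⁻¹ := inv_anti₀ hs0 ht.1
        have h2 : t⁻¹ ^ P ≤ s⁻¹ ^ P := Real.rpow_le_rpow (by positivity) hts hP0.le
        filter_upwards [hptwise_up t ht0 (le_trans ht.2 hlam1)] with x hx
        exact hx.trans (mul_le_mul_left (ENNReal.ofReal_le_ofReal h2) _)
      · rw [lintegral_const_mul' _ _ ENNReal.ofReal_ne_top, ← hσm]
        exact ENNReal.mul_ne_top ENNReal.ofReal_ne_top hσtop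
      · apply ae_of_all
        intro x
        by_cases hGx : G x = 0
        · simp only [hGx, zero_div]
          exact tendsto_const_nhds
        · have hca : ContinuousAt (fun t : ℝ => ENNReal.ofReal (|G x / t| ^ p x * ϑm x)) t₀ := by
            have hbase : ContinuousAt (fun t : ℝ => |G x / t|) t₀ :=
              (continuousAt_const.div continuousAt_id ht₀0.ne').abs
            have hb0 : |G x / t₀| ≠ 0 := abs_ne_zero.2 (div_ne_zero hGx ht₀0.ne')
            have hrpow : ContinuousAt (fun t : ℝ => |G x / t| ^ p x) t₀ :=
              ContinuousAt.rpow_const hbase (Or.inl hb0)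
            show ContinuousAt (ENNReal.ofReal ∘ fun t : ℝ => |G x / t| ^ p x * ϑm x) t₀
            exact ContinuousAt.comp ENNReal.continuous_ofReal.continuousAt
              (hrpow.mul continuousAt_const)
          exact (hca.tendsto).mono_left nhdsWithin_le_nhds
    exact (ENNReal.tendsto_toReal (hFfin t₀ ht₀)).comp htd
  -- intermediate value theorem
  have hivt := intermediate_value_Icc' hslam hcont
  have h1mem : (1:ℝ) ∈ Icc ((Fm lam).toReal) ((Fm s).toReal) := by
    constructor
    · simpa using ENNReal.toReal_mono one_ne_top hFlam1
    · simpa using ENNReal.toReal_mono (hFfin s ⟨le_refl s, hslam⟩) hFs1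
  obtain ⟨t₀, ht₀mem, ht₀⟩ := hivt h1mem
  have ht₀' : (Fm t₀).toReal = 1 := ht₀
  have hFmt₀ : Fm t₀ = 1 := by
    rw [← ENNReal.ofReal_toReal (hFfin t₀ ht₀mem), ht₀']; exact ENNReal.ofReal_one
  have ht₀0 : 0 < t₀ := lt_of_lt_of_le hs0 ht₀mem.1
  -- apply embedding hypothesis to G / t₀
  have hrho : rhoMod p ϑ Ω (fun x => G x / t₀) = 1 := by rw [hρ_eq]; exact hFmt₀
  have hEapp := hEΩ (fun x => G x / t₀) (hG.div_const t₀) (le_of_eq hrho.symm)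
  rw [hrho, mul_one] at hEapp
  -- conclude
  have hsplit : (∫⁻ x in Ω, ENNReal.ofReal (G x * ϑ x)) =
      ENNReal.ofReal t₀ * ∫⁻ x in Ω, ENNReal.ofReal (|G x / t₀| * ϑ x) := by
    rw [← lintegral_const_mul' _ _ ENNReal.ofReal_ne_top]
    apply lintegral_congr
    intro x
    rw [← ENNReal.ofReal_mul ht₀0.le]
    congr 1
    rw [abs_div, abs_of_pos ht₀0, abs_of_nonneg (hGnn x)]
    field_simp
  rw [hsplit]
  calc ENNReal.ofReal t₀ * ∫⁻ x in Ω, ENNReal.ofReal (|G x / t₀| * ϑ x)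
      ≤ ENNReal.ofReal t₀ * ENNReal.ofReal c₁ := mul_le_mul_right hEapp _
    _ ≤ ENNReal.ofReal lam * ENNReal.ofReal c₁ :=
        mul_le_mul_left (ENNReal.ofReal_le_ofReal ht₀mem.2) _
    _ = ENNReal.ofReal c₁ * σ ^ (1/P) := by
        rw [mul_comm]
        congr 1
        rw [← hofs, ENNReal.ofReal_rpow_of_pos hs0]
    _ ≤ ENNReal.ofReal c₁ * max (σ ^ (1/P)) σ := mul_le_mul_right (le_max_left _ _) _

set_option maxHeartbeats 2000000 in
/-- The Sobolev capacity of a compact set is controlled by its relative capacity. -/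
theorem stmt12 (n : ℕ) (hn : 1 ≤ n) (p ϑ : EuclideanSpace ℝ (Fin n) → ℝ)
    (hp : Measurable p)
    (hpm : 1 < essInf p (volume : Measure (EuclideanSpace ℝ (Fin n))))
    (hpb : Filter.IsBoundedUnder (· ≤ ·) (ae (volume : Measure (EuclideanSpace ℝ (Fin n)))) p)
    (hϑpos : ∀ x, 0 < ϑ x)
    (hϑloc : LocallyIntegrable ϑ (volume : Measure (EuclideanSpace ℝ (Fin n))))
    (c : ℝ) (hc : 0 < c) (hP : PoincareHyp ϑ c)
    (c₁ : Set (EuclideanSpace ℝ (Fin n)) → ℝ) (hE : EmbeddingHyp p ϑ c₁)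
    (Ω K : Set (EuclideanSpace ℝ (Fin n))) (hΩ : IsOpen Ω) (hΩb : Bornology.IsBounded Ω)
    (hK : IsCompact K) (hKΩ : K ⊆ Ω) :
    sobCap p ϑ K ≤
      ENNReal.ofReal (2 * max 1 (c * diam Ω * c₁ Ω)) *
        max (relCapK p ϑ K Ω ^ (1 / essSup p (volume : Measure (EuclideanSpace ℝ (Fin n)))))
          (relCapK p ϑ K Ω) := by
  classical
  have hne : (ae (volume : Measure (EuclideanSpace ℝ (Fin n)))).NeBot := by
    refine ae_neBot.2 ?_
    intro h0
    have h1 := congrArg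
      (fun μ : Measure (EuclideanSpace ℝ (Fin n)) => μ (Metric.ball 0 1)) h0
    simp only [Measure.coe_zero, Pi.zero_apply] at h1
    exact absurd h1 (ne_of_gt (Metric.measure_ball_pos _ _ one_pos))
  set P := essSup p (volume : Measure (EuclideanSpace ℝ (Fin n))) with hPdef
  set R := relCapK p ϑ K Ω with hRdef
  -- almost everywhere facts about p
  have h1p : ∀ᵐ x ∂(volume : Measure (EuclideanSpace ℝ (Fin n))), 1 < p x := by
    have hlim : essInf p (volume : Measure (EuclideanSpace ℝ (Fin n))) =
        sSup {a : ℝ | ∀ᶠ x in ae (volume : Measure (EuclideanSpace ℝ (Fin n))), a ≤ p x} :=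
      Filter.liminf_eq
    have hS : {a : ℝ | ∀ᶠ x in ae (volume : Measure (EuclideanSpace ℝ (Fin n))), a ≤ p x}.Nonempty := by
      by_contra hS
      rw [Set.not_nonempty_iff_eq_empty] at hS
      rw [hlim, hS, Real.sSup_empty] at hpm
      linarith
    obtain ⟨a, haS, ha⟩ := exists_lt_of_lt_csSup hS (by rw [← hlim]; exact hpm)
    filter_upwards [haS] with x hx
    linarith
  have hpP : ∀ᵐ x ∂(volume : Measure (EuclideanSpace ℝ (Fin n))), p x ≤ P := ae_le_essSup hpb
  have hP1 : 1 < P := by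
    obtain ⟨x, hx1, hx2⟩ := (h1p.and hpP).exists
    linarith
  have hP0 : (0:ℝ) < P := lt_trans one_pos hP1
  have he0 : (0:ℝ) < 1/P := by positivity
  have he1 : 1/P ≤ 1 := (div_le_one hP0).2 hP1.le
  set C0 : ℝ≥0∞ := ENNReal.ofReal (2 * max 1 (c * diam Ω * c₁ Ω)) with hC0
  have hcd0 : 0 ≤ c * diam Ω := mul_nonneg hc.le diam_nonneg
  have hc₁Ω : 0 < c₁ Ω := (hE Ω hΩ hΩb).1
  have hcdc₁ : 0 ≤ c * diam Ω * c₁ Ω := mul_nonneg hcd0 hc₁Ω.le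
  have hC0big : (0:ℝ) < 2 * max 1 (c * diam Ω * c₁ Ω) := by
    have := le_max_left (1:ℝ) (c * diam Ω * c₁ Ω)
    linarith
  have hC0pos : C0 ≠ 0 := by
    rw [hC0, Ne, ENNReal.ofReal_eq_zero]
    linarith
  have hC0top : C0 ≠ ⊤ := ENNReal.ofReal_ne_top
  rcases eq_or_ne R ⊤ with hRtop | hRtop
  · rw [hRtop, max_eq_right (le_top : (⊤:ℝ≥0∞) ^ (1/P) ≤ ⊤), ENNReal.mul_top hC0pos]
    exact le_top
  -- the main claim
  have hClaim : ∀ s : ℝ≥0∞, R < s → sobCap p ϑ K ≤ C0 * max (s ^ (1/P)) s := by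
    intro s hs
    rcases eq_or_ne s ⊤ with hstop | hstop
    · rw [hstop, max_eq_right (le_top : (⊤:ℝ≥0∞) ^ (1/P) ≤ ⊤), ENNReal.mul_top hC0pos]
      exact le_top
    rw [hRdef] at hs
    unfold relCapK at hs
    obtain ⟨v, hvmem, hvs⟩ := sInf_lt_iff.1 hs
    obtain ⟨f, hfmem, hveq⟩ := hvmem
    obtain ⟨hfC1, hfc, hfΩ, hfK⟩ := hfmem
    set ρ := rhoMod p ϑ Ω (fun x => ‖fderiv ℝ f x‖) with hρdef
    have hρv : ρ = v := hveq
    have hρs : ρ < s := hρv ▸ hvs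
    have hρtop : ρ ≠ ⊤ := (hρs.trans_le le_top).ne
    have hΩmeas : MeasurableSet Ω := hΩ.measurableSet
    have hϑm : AEMeasurable ϑ ((volume : Measure (EuclideanSpace ℝ (Fin n))).restrict Ω) :=
      hϑloc.aestronglyMeasurable.aemeasurable.restrict
    have hΩcomp : IsCompact (closure Ω) := hΩb.isCompact_closure
    have hϑint : IntegrableOn ϑ Ω volume :=
      (hϑloc.integrableOn_isCompact hΩcomp).mono_set subset_closure
    have hfcs : HasCompactSupport f := hfc
    obtain ⟨Cf, hCf⟩ := (hfcs.fderiv ℝ).exists_bound_of_continuous (hfC1.continuous_fderiv one_ne_zero)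
    -- Core estimate for every δ ∈ (0,1]
    have hCore : ∀ δ : ℝ, 0 < δ → δ ≤ 1 →
        sobCap p ϑ K ≤ (ENNReal.ofReal ((1+δ) ^ P))^2 * (C0 * max (ρ ^ (1/P)) ρ) := by
      intro δ hδ0 hδ1
      obtain ⟨η, χ, hηC1, hηder, hχnn, hχle1, hη0, hηnn, hηle, hη1⟩ := exists_cutoff δ hδ0 hδ1
      have h1δ0 : (0:ℝ) < 1 + δ := by linarith
      set g : EuclideanSpace ℝ (Fin n) → ℝ := fun x => η ((1+δ) * f x) with hgdef
      have hgC1 : ContDiff ℝ 1 g := hηC1.comp (contDiff_const.mul hfC1)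
      have hfd : ∀ x, HasFDerivAt g (χ ((1+δ) * f x) • ((1+δ) • fderiv ℝ f x)) x := by
        intro x
        have h1 : HasFDerivAt f (fderiv ℝ f x) x :=
          (hfC1.differentiable one_ne_zero x).hasFDerivAt
        have h2 : HasFDerivAt (fun y => (1+δ) * f y) ((1+δ) • fderiv ℝ f x) x :=
          h1.const_mul (1+δ)
        exact (hηder ((1+δ) * f x)).comp_hasFDerivAt x h2
      have hgderiv : ∀ x, fderiv ℝ g x = χ ((1+δ) * f x) • ((1+δ) • fderiv ℝ f x) :=
        fun x => (hfd x).fderiv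
      have hgnorm : ∀ x, ‖fderiv ℝ g x‖ ≤ (1+δ) * ‖fderiv ℝ f x‖ := by
        intro x
        rw [hgderiv x, norm_smul, norm_smul]
        simp only [Real.norm_eq_abs]
        calc |χ ((1+δ)*f x)| * (|1+δ| * ‖fderiv ℝ f x‖)
            ≤ 1 * (|1+δ| * ‖fderiv ℝ f x‖) := by
              apply mul_le_mul_of_nonneg_right _ (by positivity)
              rw [abs_of_nonneg (hχnn _)]; exact hχle1 _
          _ = (1+δ) * ‖fderiv ℝ f x‖ := by rw [one_mul, abs_of_pos h1δ0]
      have hgz : ∀ y, f y = 0 → g y = 0 := by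
        intro y hy
        show η ((1+δ) * f y) = 0
        rw [hy, mul_zero]
        exact hη0 0 le_rfl
      have hsupg : tsupport g ⊆ tsupport f := by
        have hsup : Function.support g ⊆ Function.support f := by
          intro x hx
          simp only [Function.mem_support] at hx ⊢
          intro hfx
          exact hx (hgz x hfx)
        exact closure_minimal (hsup.trans (subset_tsupport f)) (isClosed_tsupport f)
      have hsupgΩ : tsupport g ⊆ Ω := hsupg.trans hfΩ
      have hgcomp : IsCompact (tsupport g) :=
        IsCompact.of_isClosed_subset hfc (isClosed_tsupport g) hsupg
      have hgzero : ∀ x, x ∉ tsupport f → g x = 0 ∧ fderiv ℝ g x = 0 := by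
        intro x hx
        have hgx : g x = 0 := hgz x (image_eq_zero_of_notMem_tsupport hx)
        refine ⟨hgx, ?_⟩
        have hev : g =ᶠ[nhds x] (fun _ => (0:ℝ)) := by
          have hopen : IsOpen (tsupport f)ᶜ := (isClosed_tsupport f).isOpen_compl
          filter_upwards [hopen.mem_nhds hx] with y hy
          exact hgz y (image_eq_zero_of_notMem_tsupport hy)
        rw [Filter.EventuallyEq.fderiv_eq hev]
        exact fderiv_const_apply 0
      -- admissibility for the Sobolev capacity
      have hsob_le : sobCap p ϑ K ≤
          ∫⁻ x, ENNReal.ofReal ((|g x| ^ p x + ‖fderiv ℝ g x‖ ^ p x) * ϑ x) := by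
        unfold sobCap
        apply sInf_le
        refine ⟨g, ⟨hgC1, {x | 1 + 3*δ/4 < (1+δ) * f x}, ?_, ?_, ?_⟩, rfl⟩
        · exact (isOpen_Ioi).preimage (continuous_const.mul hfC1.continuous)
        · intro x hx
          have h1 := hfK x hx
          simp only [Set.mem_setOf_eq]
          nlinarith
        · intro x hx
          exact hη1 _ (le_of_lt hx)
      -- measurability
      have hgm : Measurable g := hgC1.continuous.measurable
      have hgdm : Measurable (fun x => ‖fderiv ℝ g x‖) :=
        (hgC1.continuous_fderiv one_ne_zero).norm.measurable
      have hm1 : Measurable (fun x => |g x| ^ p x) := hgm.abs.pow hp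
      have hIm1 : AEMeasurable (fun x => ENNReal.ofReal (|g x| ^ p x * ϑ x))
          ((volume : Measure (EuclideanSpace ℝ (Fin n))).restrict Ω) :=
        ((hm1.aemeasurable.mul hϑm)).ennreal_ofReal
      set A := ENNReal.ofReal ((1+δ)^P) with hA
      have hA1 : (1:ℝ≥0∞) ≤ A := by
        rw [hA, ← ENNReal.ofReal_one]
        apply ENNReal.ofReal_le_ofReal
        calc (1:ℝ) = 1 ^ P := (Real.one_rpow P).symm
          _ ≤ (1+δ)^P := Real.rpow_le_rpow zero_le_one (by linarith) hP0.le
      set I1 := ∫⁻ x in Ω, ENNReal.ofReal (|g x| ^ p x * ϑ x) with hI1def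
      set I2 := rhoMod p ϑ Ω (fun x => ‖fderiv ℝ g x‖) with hI2def
      -- the integral over Ωᶜ vanishes
      have hcompl : (∫⁻ x in Ωᶜ,
          ENNReal.ofReal ((|g x| ^ p x + ‖fderiv ℝ g x‖ ^ p x) * ϑ x)) = 0 := by
        have hae : ∀ᵐ x ∂((volume : Measure (EuclideanSpace ℝ (Fin n))).restrict Ωᶜ),
            ENNReal.ofReal ((|g x| ^ p x + ‖fderiv ℝ g x‖ ^ p x) * ϑ x) = 0 := by
          have h1pc : ∀ᵐ x ∂((volume : Measure (EuclideanSpace ℝ (Fin n))).restrict Ωᶜ),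
              1 < p x := ae_restrict_of_ae h1p
          have hxmem : ∀ᵐ x ∂((volume : Measure (EuclideanSpace ℝ (Fin n))).restrict Ωᶜ),
              x ∈ Ωᶜ := ae_restrict_mem hΩmeas.compl
          filter_upwards [h1pc, hxmem] with x hpx hxc
          have hxnot : x ∉ tsupport f := fun hmem => hxc (hfΩ hmem)
          obtain ⟨hg0, hgd0⟩ := hgzero x hxnot
          rw [hg0, hgd0, abs_zero, norm_zero,
            Real.zero_rpow (lt_trans one_pos hpx).ne']
          simp
        calc (∫⁻ x in Ωᶜ, ENNReal.ofReal ((|g x| ^ p x + ‖fderiv ℝ g x‖ ^ p x) * ϑ x))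
            = ∫⁻ _ in Ωᶜ, (0:ℝ≥0∞) := lintegral_congr_ae hae
          _ = 0 := lintegral_zero
      -- split the full integral
      have hsplit : (∫⁻ x, ENNReal.ofReal ((|g x| ^ p x + ‖fderiv ℝ g x‖ ^ p x) * ϑ x))
          ≤ I1 + I2 := by
        have htot : (∫⁻ x, ENNReal.ofReal ((|g x| ^ p x + ‖fderiv ℝ g x‖ ^ p x) * ϑ x))
            = ∫⁻ x in Ω, ENNReal.ofReal ((|g x| ^ p x + ‖fderiv ℝ g x‖ ^ p x) * ϑ x) := by
          rw [← lintegral_add_compl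
            (fun x => ENNReal.ofReal ((|g x| ^ p x + ‖fderiv ℝ g x‖ ^ p x) * ϑ x)) hΩmeas,
            hcompl, add_zero]
        rw [htot]
        have heq : ∀ᵐ x ∂((volume : Measure (EuclideanSpace ℝ (Fin n))).restrict Ω),
            ENNReal.ofReal ((|g x| ^ p x + ‖fderiv ℝ g x‖ ^ p x) * ϑ x) =
            ENNReal.ofReal (|g x| ^ p x * ϑ x) +
              ENNReal.ofReal (|‖fderiv ℝ g x‖| ^ p x * ϑ x) := by
          apply ae_of_all
          intro x
          rw [abs_norm, add_mul, ENNReal.ofReal_add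
            (mul_nonneg (Real.rpow_nonneg (abs_nonneg _) _) (hϑpos x).le)
            (mul_nonneg (Real.rpow_nonneg (norm_nonneg _) _) (hϑpos x).le)]
        rw [lintegral_congr_ae heq, lintegral_add_left' hIm1]
        exact le_rfl
      -- gradient term estimate
      have hI2 : I2 ≤ A * ρ := by
        have hstep : I2 ≤ ∫⁻ x in Ω, A * ENNReal.ofReal (|‖fderiv ℝ f x‖| ^ p x * ϑ x) := by
            apply lintegral_mono_ae
            filter_upwards [ae_restrict_of_ae h1p, ae_restrict_of_ae hpP] with x hpx hpPx
            rw [hA, ← ENNReal.ofReal_mul (Real.rpow_nonneg (by linarith) _)]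
            apply ENNReal.ofReal_le_ofReal
            rw [abs_norm, abs_norm]
            have h1 : ‖fderiv ℝ g x‖ ^ p x ≤ ((1+δ) * ‖fderiv ℝ f x‖) ^ p x :=
              Real.rpow_le_rpow (norm_nonneg _) (hgnorm x) (by linarith)
            have h2 : ((1+δ) * ‖fderiv ℝ f x‖) ^ p x
                = (1+δ)^(p x) * ‖fderiv ℝ f x‖^(p x) :=
              Real.mul_rpow (by linarith) (norm_nonneg _)
            have h3 : (1+δ)^(p x) ≤ (1+δ)^P :=
              Real.rpow_le_rpow_of_exponent_le (by linarith) hpPx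
            calc ‖fderiv ℝ g x‖ ^ p x * ϑ x
                ≤ ((1+δ)^(p x) * ‖fderiv ℝ f x‖^(p x)) * ϑ x := by
                  rw [← h2]; exact mul_le_mul_of_nonneg_right h1 (hϑpos x).le
              _ ≤ ((1+δ)^P * ‖fderiv ℝ f x‖^(p x)) * ϑ x :=
                  mul_le_mul_of_nonneg_right
                    (mul_le_mul_of_nonneg_right h3 (Real.rpow_nonneg (norm_nonneg _) _))
                    (hϑpos x).le
              _ = (1+δ)^P * (‖fderiv ℝ f x‖^(p x) * ϑ x) := by ring
        refine hstep.trans (le_of_eq ?_)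
        rw [lintegral_const_mul' _ _ ENNReal.ofReal_ne_top]
        rfl
      have hI2top : I2 ≠ ⊤ :=
        ne_top_of_le_ne_top (ENNReal.mul_ne_top ENNReal.ofReal_ne_top hρtop) hI2
      -- integrability for the Poincaré step
      have hint1 : IntegrableOn (fun x => |g x| * ϑ x) Ω volume := by
        apply Integrable.bdd_mul (c := 1+δ) hϑint (hgC1.continuous.abs.aestronglyMeasurable)
        exact ae_of_all _ fun x => by
          rw [Real.norm_eq_abs, abs_abs, abs_of_nonneg (hηnn _)]
          exact hηle _
      have hint2 : IntegrableOn (fun x => ‖fderiv ℝ g x‖ * ϑ x) Ω volume := by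
        apply Integrable.bdd_mul (c := (1+δ) * Cf) hϑint ((hgC1.continuous_fderiv one_ne_zero).norm.aestronglyMeasurable)
        refine ae_of_all _ fun x => ?_
        rw [norm_norm]
        exact (hgnorm x).trans (mul_le_mul_of_nonneg_left (hCf x) h1δ0.le)
      have hPoin := hP Ω hΩ hΩb g hgC1 hgcomp hsupgΩ
      have hofReal1 : (∫⁻ x in Ω, ENNReal.ofReal (|g x| * ϑ x))
          = ENNReal.ofReal (∫ x in Ω, |g x| * ϑ x) :=
        (ofReal_integral_eq_lintegral_ofReal hint1
          (ae_of_all _ fun x => mul_nonneg (abs_nonneg _) (hϑpos x).le)).symm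
      have hofReal2 : ENNReal.ofReal (∫ x in Ω, ‖fderiv ℝ g x‖ * ϑ x)
          = ∫⁻ x in Ω, ENNReal.ofReal (‖fderiv ℝ g x‖ * ϑ x) :=
        ofReal_integral_eq_lintegral_ofReal hint2
          (ae_of_all _ fun x => mul_nonneg (norm_nonneg _) (hϑpos x).le)
      -- embedding estimate for the gradient in L¹
      have hembed := embed_norm p ϑ hp hϑpos Ω P hP1 h1p hpP hϑm (c₁ Ω) (hE Ω hΩ hΩb).2
        (fun x => ‖fderiv ℝ g x‖) hgdm (fun x => norm_nonneg _) hI2top hc₁Ω.le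
      -- first term estimate
      have hI1a : I1 ≤ A * ∫⁻ x in Ω, ENNReal.ofReal (|g x| * ϑ x) := by
        have hstep : I1 ≤ ∫⁻ x in Ω, A * ENNReal.ofReal (|g x| * ϑ x) := by
            apply lintegral_mono_ae
            filter_upwards [ae_restrict_of_ae h1p, ae_restrict_of_ae hpP] with x hpx hpPx
            rw [hA, ← ENNReal.ofReal_mul (Real.rpow_nonneg (by linarith) _)]
            apply ENNReal.ofReal_le_ofReal
            by_cases hgx0 : g x = 0
            · rw [hgx0, abs_zero, Real.zero_rpow (lt_trans one_pos hpx).ne', zero_mul]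
              positivity
            · have hgpos : 0 < g x := lt_of_le_of_ne (hηnn _) (Ne.symm hgx0)
              have habs : |g x| = g x := abs_of_pos hgpos
              have h1 : |g x| ^ p x = |g x| ^ (p x - 1) * |g x| := by
                rw [← Real.rpow_add_one (abs_ne_zero.2 hgx0) (p x - 1), sub_add_cancel]
              have h2 : |g x| ^ (p x - 1) ≤ (1+δ) ^ (p x - 1) :=
                Real.rpow_le_rpow (abs_nonneg _) (by rw [habs]; exact hηle _) (by linarith)
              have h3 : (1+δ) ^ (p x - 1) ≤ (1+δ)^P :=
                Real.rpow_le_rpow_of_exponent_le (by linarith) (by linarith)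
              calc |g x| ^ p x * ϑ x = (|g x| ^ (p x - 1) * |g x|) * ϑ x := by rw [← h1]
                _ ≤ ((1+δ)^P * |g x|) * ϑ x :=
                    mul_le_mul_of_nonneg_right
                      (mul_le_mul_of_nonneg_right (h2.trans h3) (abs_nonneg _)) (hϑpos x).le
                _ = (1+δ)^P * (|g x| * ϑ x) := by ring
        exact hstep.trans (le_of_eq (lintegral_const_mul' _ _ ENNReal.ofReal_ne_top))
      set mI := max (I2 ^ (1/P)) I2 with hmI
      have hI1 : I1 ≤ A * (ENNReal.ofReal (c * diam Ω * c₁ Ω) * mI) := by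
        refine hI1a.trans (mul_le_mul_right ?_ A)
        calc (∫⁻ x in Ω, ENNReal.ofReal (|g x| * ϑ x))
            = ENNReal.ofReal (∫ x in Ω, |g x| * ϑ x) := hofReal1
          _ ≤ ENNReal.ofReal (c * diam Ω * ∫ x in Ω, ‖fderiv ℝ g x‖ * ϑ x) :=
              ENNReal.ofReal_le_ofReal hPoin
          _ = ENNReal.ofReal (c * diam Ω) *
                ENNReal.ofReal (∫ x in Ω, ‖fderiv ℝ g x‖ * ϑ x) := ENNReal.ofReal_mul hcd0
          _ = ENNReal.ofReal (c * diam Ω) *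
                ∫⁻ x in Ω, ENNReal.ofReal (‖fderiv ℝ g x‖ * ϑ x) := by rw [hofReal2]
          _ ≤ ENNReal.ofReal (c * diam Ω) * (ENNReal.ofReal (c₁ Ω) * mI) :=
              mul_le_mul_right hembed _
          _ = ENNReal.ofReal (c * diam Ω * c₁ Ω) * mI := by
              rw [ENNReal.ofReal_mul hcd0, mul_assoc]
      -- combine
      have htotal : sobCap p ϑ K ≤ A * (C0 * mI) := by
        refine hsob_le.trans (hsplit.trans ?_)
        have hstep : I1 + I2 ≤ A * (ENNReal.ofReal (c * diam Ω * c₁ Ω) * mI) + A * (1 * mI) := by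
          apply add_le_add hI1
          rw [one_mul]
          exact (le_max_right _ _).trans (le_mul_of_one_le_left (zero_le) hA1)
        refine hstep.trans ?_
        have hco : ENNReal.ofReal (c * diam Ω * c₁ Ω) + 1 ≤ C0 := by
          rw [hC0, ← ENNReal.ofReal_one, ← ENNReal.ofReal_add hcdc₁ zero_le_one]
          apply ENNReal.ofReal_le_ofReal
          have h1 := le_max_left (1:ℝ) (c * diam Ω * c₁ Ω)
          have h2 := le_max_right (1:ℝ) (c * diam Ω * c₁ Ω)
          linarith
        calc A * (ENNReal.ofReal (c * diam Ω * c₁ Ω) * mI) + A * (1 * mI)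
            = A * ((ENNReal.ofReal (c * diam Ω * c₁ Ω) + 1) * mI) := by ring
          _ ≤ A * (C0 * mI) := mul_le_mul_right (mul_le_mul_left hco _) _
      have hmIle : mI ≤ A * max (ρ ^ (1/P)) ρ := by
        apply max_le
        · calc I2 ^ (1/P) ≤ (A * ρ) ^ (1/P) := ENNReal.rpow_le_rpow hI2 he0.le
            _ = A ^ (1/P) * ρ ^ (1/P) := ENNReal.mul_rpow_of_nonneg _ _ he0.le
            _ ≤ A * ρ ^ (1/P) := by
                apply mul_le_mul_left
                calc A ^ (1/P) ≤ A ^ (1:ℝ) := ENNReal.rpow_le_rpow_of_exponent_le hA1 he1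
                  _ = A := ENNReal.rpow_one A
            _ ≤ A * max (ρ ^ (1/P)) ρ := mul_le_mul_right (le_max_left _ _) _
        · exact hI2.trans (mul_le_mul_right (le_max_right _ _) _)
      calc sobCap p ϑ K ≤ A * (C0 * mI) := htotal
        _ ≤ A * (C0 * (A * max (ρ ^ (1/P)) ρ)) :=
            mul_le_mul_right (mul_le_mul_right hmIle _) _
        _ = A^2 * (C0 * max (ρ ^ (1/P)) ρ) := by ring
    -- choose δ depending on s
    rcases eq_or_ne ρ 0 with hρ0 | hρ0
    · have h := hCore 1 one_pos le_rfl
      rw [hρ0] at h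
      have hzero : max ((0:ℝ≥0∞) ^ (1/P)) 0 = 0 := by
        rw [ENNReal.zero_rpow_of_pos he0]; simp
      rw [hzero, mul_zero, mul_zero] at h
      exact h.trans (zero_le)
    · set m := max (ρ ^ (1/P)) ρ with hm
      set M := max (s ^ (1/P)) s with hM
      have hρe_top : ρ ^ (1/P) ≠ ⊤ := ENNReal.rpow_ne_top_of_nonneg he0.le hρtop
      have hmtop : m ≠ ⊤ := (max_lt hρe_top.lt_top hρtop.lt_top).ne
      have hm0 : m ≠ 0 := fun h =>
        hρ0 (le_antisymm (le_trans (le_max_right _ _) h.le) (zero_le))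
      have hse_top : s ^ (1/P) ≠ ⊤ := ENNReal.rpow_ne_top_of_nonneg he0.le hstop
      have hMtop : M ≠ ⊤ := (max_lt hse_top.lt_top hstop.lt_top).ne
      have hmM : m < M :=
        max_lt (lt_of_lt_of_le (ENNReal.rpow_lt_rpow hρs he0) (le_max_left _ _))
          (lt_of_lt_of_le hρs (le_max_right _ _))
      have hmr0 : 0 < m.toReal := ENNReal.toReal_pos hm0 hmtop
      have hmrMr : m.toReal < M.toReal := ENNReal.toReal_strict_mono hMtop hmM
      set γ := (M.toReal / m.toReal) ^ (1/(2*P)) with hγ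
      have hγ1 : 1 < γ := by
        rw [hγ]
        refine (Real.one_lt_rpow_iff_of_pos (div_pos (by linarith) hmr0)).2 (Or.inl ?_)
        exact ⟨(one_lt_div hmr0).2 hmrMr, div_pos one_pos (by linarith)⟩
      set δ := min 1 (γ - 1) with hδdef
      have hδ0 : 0 < δ := lt_min one_pos (by linarith)
      have hδ1 : δ ≤ 1 := min_le_left _ _
      have h1δγ : 1 + δ ≤ γ := by
        have := min_le_right 1 (γ - 1)
        have : δ ≤ γ - 1 := min_le_right _ _
        linarith
      have ha : (0:ℝ) ≤ (1+δ)^P := Real.rpow_nonneg (by linarith) _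
      have hA2 : (ENNReal.ofReal ((1+δ)^P))^2 * m ≤ M := by
        calc (ENNReal.ofReal ((1+δ)^P))^2 * m
            = ENNReal.ofReal ((1+δ)^P * (1+δ)^P) * m := by
              rw [sq, ← ENNReal.ofReal_mul ha]
          _ ≤ ENNReal.ofReal (M.toReal / m.toReal) * m := by
              apply mul_le_mul_left
              apply ENNReal.ofReal_le_ofReal
              have hb : (1+δ)^P * (1+δ)^P = (1+δ)^(2*P) := by
                rw [← Real.rpow_add (by linarith)]; ring_nf
              rw [hb]
              calc (1+δ)^(2*P) ≤ γ^(2*P) :=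
                  Real.rpow_le_rpow (by linarith) h1δγ (by positivity)
                _ = M.toReal / m.toReal := by
                    rw [hγ, ← Real.rpow_mul (by positivity),
                      one_div_mul_cancel (by positivity : (2*P) ≠ 0), Real.rpow_one]
          _ = ENNReal.ofReal (M.toReal / m.toReal) * ENNReal.ofReal m.toReal := by
              rw [ENNReal.ofReal_toReal hmtop]
          _ = ENNReal.ofReal (M.toReal / m.toReal * m.toReal) :=
              (ENNReal.ofReal_mul (by positivity)).symm
          _ = ENNReal.ofReal M.toReal := by rw [div_mul_cancel₀ _ hmr0.ne']
          _ = M := ENNReal.ofReal_toReal hMtop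
      calc sobCap p ϑ K ≤ (ENNReal.ofReal ((1+δ)^P))^2 * (C0 * m) := hCore δ hδ0 hδ1
        _ = C0 * ((ENNReal.ofReal ((1+δ)^P))^2 * m) := by ring
        _ ≤ C0 * M := mul_le_mul_right hA2 _
  -- pass to the limit s → R⁺
  have hcont : Continuous (fun s : ℝ≥0∞ => C0 * max (s ^ (1/P)) s) := by
    apply (ENNReal.continuous_const_mul hC0top).comp
    exact ENNReal.continuous_rpow_const.max continuous_id
  haveI hnb : (nhdsWithin R (Set.Ioi R)).NeBot :=
    nhdsGT_neBot_of_exists_gt ⟨⊤, lt_top_iff_ne_top.2 hRtop⟩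
  have htt : Tendsto (fun s : ℝ≥0∞ => C0 * max (s ^ (1/P)) s) (nhdsWithin R (Set.Ioi R))
      (nhds (C0 * max (R ^ (1/P)) R)) := (hcont.tendsto R).mono_left nhdsWithin_le_nhds
  refine ge_of_tendsto htt ?_
  filter_upwards [self_mem_nhdsWithin] with s hs
  exact hClaim s hs


end
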